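/- Let π̄ ∈ Π(p̄,q̄;M̄) satisfy π̄_{m+1,n+1} = 0, and let π̈ ∈ ℝ_{≥0}^{m×n} be the upper-left m×n block of π̄. Then π̈ belongs to the partial masked feasible set Π^s(p,q;M); that is, (M⊙π̈)1_n ≤ p entrywise, (M⊙π̈)^T 1_m ≤ q entrywise, 1_m^T (M⊙π̈) 1_n = s, Σ_j (M⊙π̈)_{i,j} = p_i for every i ∈ I, and Σ_i (M⊙π̈)_{i,j} = q_j for every j ∈ J. -/
import Mathlib


open Finset

noncomputable section

variable {m n : ℕ}

/-- Mask matrix determined by the keypoint pair set `K`: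
`M i j = 1` if `(i,j) ∈ K`; `M i j = 0` if `i ∈ I` or `j ∈ J` but `(i,j) ∉ K`;
`M i j = 1` otherwise. -/
def mask (K : Finset (Fin m × Fin n)) : Matrix (Fin m) (Fin n) ℝ :=
  fun i j =>
    if (i, j) ∈ K then 1
    else if (∃ j', (i, j') ∈ K) ∨ (∃ i', (i', j) ∈ K) then 0
    else 1

/-- The masked feasible set `Π(p, q; M)`. -/
def PiM (M : Matrix (Fin m) (Fin n) ℝ) (p : Fin m → ℝ) (q : Fin n → ℝ) :
    Set (Matrix (Fin m) (Fin n) ℝ) :=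
  {π | (∀ i j, 0 ≤ π i j) ∧ (∀ i, ∑ j, M i j * π i j = p i) ∧
    (∀ j, ∑ i, M i j * π i j = q j)}

/-- Extend an `m × n` matrix by one extra column, one extra row and a corner entry. -/
def extend (B : Matrix (Fin m) (Fin n) ℝ) (col : Fin m → ℝ) (row : Fin n → ℝ)
    (corner : ℝ) : Matrix (Fin (m + 1)) (Fin (n + 1)) ℝ :=
  fun i j =>
    if hi : (i : ℕ) < m then
      if hj : (j : ℕ) < n then B ⟨i, hi⟩ ⟨j, hj⟩ else col ⟨i, hi⟩
    else if hj : (j : ℕ) < n then row ⟨j, hj⟩ else corner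

/-- Extend a vector by one extra entry. -/
def extVec (v : Fin m → ℝ) (last : ℝ) : Fin (m + 1) → ℝ :=
  fun i => if hi : (i : ℕ) < m then v ⟨i, hi⟩ else last

/-- `a i = 0` if `i ∈ I` and `1` otherwise. -/
def avec (K : Finset (Fin m × Fin n)) : Fin m → ℝ :=
  fun i => if ∃ j, (i, j) ∈ K then 0 else 1

/-- `b j = 0` if `j ∈ J` and `1` otherwise. -/
def bvec (K : Finset (Fin m × Fin n)) : Fin n → ℝ :=
  fun j => if ∃ i, (i, j) ∈ K then 0 else 1

/-- The extended mask `M̄`. -/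
def Mbar (K : Finset (Fin m × Fin n)) : Matrix (Fin (m + 1)) (Fin (n + 1)) ℝ :=
  extend (mask K) (avec K) (bvec K) 1

/-- The extended guiding matrix `Ḡ`. -/
def Gbar (G : Matrix (Fin m) (Fin n) ℝ) (ξ A : ℝ) :
    Matrix (Fin (m + 1)) (Fin (n + 1)) ℝ :=
  extend G (fun _ => ξ) (fun _ => ξ) (2 * ξ + A)

/-- The extended source weights `p̄ = (pᵀ, ‖q‖₁ − s)ᵀ`. -/
def pbar (p : Fin m → ℝ) (q : Fin n → ℝ) (s : ℝ) : Fin (m + 1) → ℝ :=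
  extVec p (∑ j, q j - s)

/-- The extended target weights `q̄ = (qᵀ, ‖p‖₁ − s)ᵀ`. -/
def qbar (p : Fin m → ℝ) (q : Fin n → ℝ) (s : ℝ) : Fin (n + 1) → ℝ :=
  extVec q (∑ i, p i - s)

/-- The partial masked feasible set `Π^s(p, q; M)`. -/
def PiPartial (K : Finset (Fin m × Fin n)) (p : Fin m → ℝ) (q : Fin n → ℝ) (s : ℝ) :
    Set (Matrix (Fin m) (Fin n) ℝ) :=
  {π | (∀ i j, 0 ≤ π i j) ∧ (∀ i, ∑ j, mask K i j * π i j ≤ p i) ∧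
    (∀ j, ∑ i, mask K i j * π i j ≤ q j) ∧
    (∑ i, ∑ j, mask K i j * π i j = s) ∧
    (∀ i, (∃ j, (i, j) ∈ K) → ∑ j, mask K i j * π i j = p i) ∧
    (∀ j, (∃ i, (i, j) ∈ K) → ∑ i, mask K i j * π i j = q j)}

lemma avec_nonneg (K : Finset (Fin m × Fin n)) (i : Fin m) : 0 ≤ avec K i := by
  unfold avec; split <;> norm_num

lemma bvec_nonneg (K : Finset (Fin m × Fin n)) (j : Fin n) : 0 ≤ bvec K j := by
  unfold bvec; split <;> norm_num

/-- if `π̄ ∈ Π(p̄,q̄;M̄)` has zero dummy-to-dummy mass, then its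
upper-left `m × n` block belongs to the partial masked feasible set `Π^s(p,q;M)`. -/
theorem upper_left_block_partial_feasible
    (p : Fin m → ℝ) (q : Fin n → ℝ) (K : Finset (Fin m × Fin n)) (s : ℝ)
    (hp : ∀ i, 0 ≤ p i) (hq : ∀ j, 0 ≤ q j)
    (hK1 : ∀ a ∈ K, ∀ b ∈ K, a.1 = b.1 → a = b)
    (hK2 : ∀ a ∈ K, ∀ b ∈ K, a.2 = b.2 → a = b)
    (hs0 : 0 ≤ s) (hs : s ≤ min (∑ i, p i) (∑ j, q j))
    (πb : Matrix (Fin (m + 1)) (Fin (n + 1)) ℝ)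
    (hπb : πb ∈ PiM (Mbar K) (pbar p q s) (qbar p q s))
    (hzero : πb (Fin.last m) (Fin.last n) = 0) :
    (fun (i : Fin m) (j : Fin n) => πb i.castSucc j.castSucc) ∈ PiPartial K p q s := by
  obtain ⟨hnn, hrow, hcol⟩ := hπb
  have hMcc : ∀ (i : Fin m) (j : Fin n), Mbar K i.castSucc j.castSucc = mask K i j := by
    intro i j; simp [Mbar, extend, i.isLt, j.isLt]
  have hMcl : ∀ (i : Fin m), Mbar K i.castSucc (Fin.last n) = avec K i := by
    intro i; simp [Mbar, extend, i.isLt]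
  have hMlc : ∀ (j : Fin n), Mbar K (Fin.last m) j.castSucc = bvec K j := by
    intro j; simp [Mbar, extend, j.isLt]
  have hrow' : ∀ i : Fin m, (∑ j, mask K i j * πb i.castSucc j.castSucc)
      + avec K i * πb i.castSucc (Fin.last n) = p i := by
    intro i
    have h := hrow i.castSucc
    rw [Fin.sum_univ_castSucc] at h
    simp only [hMcc, hMcl] at h
    simpa [pbar, extVec, i.isLt] using h
  have hcol' : ∀ j : Fin n, (∑ i, mask K i j * πb i.castSucc j.castSucc)
      + bvec K j * πb (Fin.last m) j.castSucc = q j := by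
    intro j
    have h := hcol j.castSucc
    rw [Fin.sum_univ_castSucc] at h
    simp only [hMcc, hMlc] at h
    simpa [qbar, extVec, j.isLt] using h
  have hlastcol : ∑ i : Fin m, avec K i * πb i.castSucc (Fin.last n) = (∑ i, p i) - s := by
    have h := hcol (Fin.last n)
    rw [Fin.sum_univ_castSucc] at h
    simp only [hMcl] at h
    have hMll : Mbar K (Fin.last m) (Fin.last n) = 1 := by simp [Mbar, extend]
    rw [hMll, hzero] at h
    simpa [qbar, extVec] using h
  refine ⟨fun i j => hnn _ _, fun i => ?_, fun j => ?_, ?_, fun i hi => ?_, fun j hj => ?_⟩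
  · have := mul_nonneg (avec_nonneg K i) (hnn i.castSucc (Fin.last n))
    linarith [hrow' i]
  · have := mul_nonneg (bvec_nonneg K j) (hnn (Fin.last m) j.castSucc)
    linarith [hcol' j]
  · have : ∀ i : Fin m, (∑ j, mask K i j * πb i.castSucc j.castSucc)
        = p i - avec K i * πb i.castSucc (Fin.last n) := fun i => by linarith [hrow' i]
    rw [Finset.sum_congr rfl (fun i _ => this i), Finset.sum_sub_distrib, hlastcol]
    ring
  · have ha : avec K i = 0 := by simp [avec, hi]
    have := hrow' i
    rw [ha, zero_mul, add_zero] at this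
    exact this
  · have hb : bvec K j = 0 := by simp [bvec, hj]
    have := hcol' j
    rw [hb, zero_mul, add_zero] at this
    exact this
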